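/- Assume T''(x₀) = 0. Then there exist δ₀ > 0 and C > 0 such that for every y ∈ Ω with 0 < |y − x₀| ≤ δ₀, one has |2π·g(x₀,y) − (T'''(x₀)/(6·T'(x₀)))·(y − x₀) − |T'(x₀)|²·conj(y − x₀)| ≤ C·|y − x₀|². -/

import Mathlib

open Complex

section Aux
open Filter Set

lemma two_pts {x₀ : ℂ} {s : Set ℂ} (hs : s ∈ nhds x₀) :
    ∃ z ∈ s, z ≠ x₀ := by
  obtain ⟨ε, hε, hball⟩ := Metric.mem_nhds_iff.mp hs
  refine ⟨x₀ + ε/2, hball ?_, by simp [hε.ne']⟩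
  simp [Complex.dist_eq, abs_of_pos hε, half_lt_self hε]

lemma deriv_ne_zero_of_injOn {Ω : Set ℂ} (hΩo : IsOpen Ω) {T : ℂ → ℂ}
    (hT : DifferentiableOn ℂ T Ω) (hinj : Set.InjOn T Ω) {x₀ : ℂ} (hx₀ : x₀ ∈ Ω) :
    deriv T x₀ ≠ 0 := by
  intro hd0
  have hΩn : Ω ∈ nhds x₀ := hΩo.mem_nhds hx₀
  have hA : AnalyticAt ℂ T x₀ := hT.analyticAt hΩn
  have hf : AnalyticAt ℂ (fun z => T z - T x₀) x₀ := hA.sub analyticAt_const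
  -- key: no two distinct points of Ω near x₀ have the same T value
  have hsep : ∀ s ∈ nhds x₀, ¬ ∃ z₁ ∈ s ∩ Ω, ∃ z₂ ∈ s ∩ Ω, z₁ ≠ z₂ ∧ T z₁ = T z₂ := by
    rintro s hs ⟨z₁, hz₁, z₂, hz₂, hne, heq⟩
    exact hne (hinj hz₁.2 hz₂.2 heq)
  rcases eq_or_ne (analyticOrderAt (fun z => T z - T x₀) x₀) ⊤ with hord | hord
  · -- T locally constant: contradiction
    have hev : ∀ᶠ z in nhds x₀, T z - T x₀ = 0 := analyticOrderAt_eq_top.mp hord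
    have hs : {z : ℂ | T z - T x₀ = 0} ∈ nhds x₀ := hev
    obtain ⟨z, hz, hzne⟩ := two_pts (inter_mem hs hΩn)
    refine hsep _ hs ⟨z, hz, x₀, ⟨by simp, hx₀⟩, hzne, ?_⟩
    have : T z - T x₀ = 0 := hz.1
    have h0 : T x₀ - T x₀ = 0 := by ring
    linear_combination this
  · obtain ⟨n, hn⟩ : ∃ n : ℕ, analyticOrderAt (fun z => T z - T x₀) x₀ = n := ⟨(analyticOrderAt (fun z => T z - T x₀) x₀).toNat, (ENat.coe_toNat hord).symm⟩
    obtain ⟨g, hg, hg0, hev⟩ := hf.analyticOrderAt_eq_natCast.mp hn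
    match n with
    | 0 =>
      have := hev.self_of_nhds
      simp at this
      exact hg0 (by simpa [this.symm] using this ▸ rfl)
    | 1 =>
      have h1 : deriv (fun z => T z - T x₀) x₀ = g x₀ := by
        have hgd : HasDerivAt g (deriv g x₀) x₀ := hg.differentiableAt.hasDerivAt
        have hD : HasDerivAt (fun z => (z - x₀) * g z)
            ((1 : ℂ) * g x₀ + (x₀ - x₀) * deriv g x₀) x₀ :=
          (((hasDerivAt_id x₀).sub_const x₀)).mul hgd
        calc deriv (fun z => T z - T x₀) x₀ = deriv (fun z => (z - x₀) ^ 1 • g z) x₀ :=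
              Filter.EventuallyEq.deriv_eq hev
          _ = g x₀ := by simpa using hD.deriv
      have h2 : deriv (fun z => T z - T x₀) x₀ = deriv T x₀ :=
        ((hA.differentiableAt.hasDerivAt).sub_const (T x₀)).deriv
      exact hg0 (by rw [← h1, h2, hd0])
    | (m + 2) =>
      set k : ℕ := m + 2 with hk
      have hkne : (k : ℂ) ≠ 0 := Nat.cast_ne_zero.mpr (by omega)
      have hgne : ∀ᶠ z in nhds x₀, g z ≠ 0 := hg.continuousAt.eventually_ne hg0
      set w : ℂ := Complex.exp (Complex.log (g x₀) / k) with hwdef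
      have hw : w ^ k = g x₀ := by
        rw [hwdef, ← Complex.exp_nat_mul, mul_div_cancel₀ _ hkne, Complex.exp_log hg0]
      set u : ℂ → ℂ := fun z => w * Complex.exp ((k : ℂ)⁻¹ * Complex.log (g z / g x₀)) with hudef
      have hune : ∀ z, u z ≠ 0 :=
        fun z => mul_ne_zero (Complex.exp_ne_zero _) (Complex.exp_ne_zero _)
      have hu_an : AnalyticAt ℂ u x₀ := by
        refine analyticAt_const.mul (AnalyticAt.cexp (analyticAt_const.mul ?_))
        refine (hg.div analyticAt_const hg0).clog ?_
        simp [div_self hg0, Complex.one_mem_slitPlane]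
      have huk : ∀ᶠ z in nhds x₀, u z ^ k = g z := by
        filter_upwards [hgne] with z hz
        rw [hudef]
        simp only [mul_pow, hw, ← Complex.exp_nat_mul, ← mul_assoc,
          mul_inv_cancel₀ hkne, one_mul, Complex.exp_log (div_ne_zero hz hg0)]
        field_simp
      set ψ : ℂ → ℂ := fun z => (z - x₀) * u z with hψdef
      have hψ_an : AnalyticAt ℂ ψ x₀ := ((analyticAt_id).sub analyticAt_const).mul hu_an
      have hψ0 : ψ x₀ = 0 := by simp [hψdef]
      have hψev : ∀ᶠ z in nhds x₀, T z - T x₀ = ψ z ^ k := by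
        filter_upwards [hev, huk] with z h1 h2
        rw [h1, hψdef]
        simp only [mul_pow, h2, smul_eq_mul]
      rcases hψ_an.eventually_constant_or_nhds_le_map_nhds with hconst | hmap
      · obtain ⟨z, hz, hzne⟩ := two_pts (hconst : {z : ℂ | ψ z = ψ x₀} ∈ nhds x₀)
        have hz0 : (z - x₀) * u z = 0 := by
          have : ψ z = ψ x₀ := hz
          rw [hψ0] at this
          simpa [hψdef] using this
        rcases mul_eq_zero.mp hz0 with h | h
        · exact hzne (sub_eq_zero.mp h)
        · exact hune z h
      · -- open mapping: image of the good set is a neighborhood of 0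
        set s : Set ℂ := {z | T z - T x₀ = ψ z ^ k} ∩ Ω with hsdef
        have hs : s ∈ nhds x₀ := inter_mem hψev hΩn
        have himg : ψ '' s ∈ nhds (0 : ℂ) := by
          rw [← hψ0]
          exact hmap (image_mem_map hs)
        obtain ⟨ε, hε, hball⟩ := Metric.mem_nhds_iff.mp himg
        set θ : ℝ := 2 * Real.pi / k with hθdef
        have hθpos : 0 < θ := by positivity
        have hθlt : θ < 2 * Real.pi := by
          rw [hθdef, div_lt_iff₀ (by positivity : (0:ℝ) < k)]
          have : (2:ℝ) ≤ k := by exact_mod_cast Nat.le_add_left 2 m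
          nlinarith [Real.pi_pos]
        set ζ : ℂ := Complex.exp (θ * I) with hζdef
        have hζabs : ‖ζ‖ = 1 := Complex.norm_exp_ofReal_mul_I θ
        have hζk : ζ ^ k = 1 := by
          rw [hζdef, ← Complex.exp_nat_mul, ← mul_assoc]
          have h2 : ((m : ℂ) + 1 + 1) ≠ 0 := by
            have hcast : ((k : ℕ) : ℂ) = (m : ℂ) + 1 + 1 := by push_cast [hk]; ring
            rwa [hcast] at hkne
          have : (k : ℂ) * θ = 2 * Real.pi := by
            rw [hθdef]
            push_cast
            field_simp
          rw [this]
          simpa using Complex.exp_int_mul_two_pi_mul_I 1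
        have hζ1 : ζ ≠ 1 := by
          intro hcontr
          have hre : Real.cos θ = 1 := by
            have := congrArg Complex.re hcontr
            rwa [hζdef, Complex.exp_ofReal_mul_I_re, Complex.one_re] at this
          have := (Real.cos_eq_one_iff_of_lt_of_lt (by linarith) hθlt).mp hre
          exact hθpos.ne' this
        set t : ℂ := ((ε / 2 : ℝ) : ℂ) with htdef
        have ht0 : t ≠ 0 := by
          simp [htdef]
          positivity
        have habs_t : ‖t‖ < ε := by
          rw [htdef]
          rw [Complex.norm_real, Real.norm_eq_abs, abs_of_pos (by positivity)]
          linarith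
        have ht1 : t ∈ Metric.ball (0 : ℂ) ε := by simpa [Complex.dist_eq] using habs_t
        have ht2 : t * ζ ∈ Metric.ball (0 : ℂ) ε := by
          simp only [Metric.mem_ball, Complex.dist_eq, sub_zero, norm_mul, hζabs, mul_one]
          simpa [Complex.dist_eq] using habs_t
        obtain ⟨z₁, hz₁s, hz₁⟩ := hball ht1
        obtain ⟨z₂, hz₂s, hz₂⟩ := hball ht2
        refine hsep {z | T z - T x₀ = ψ z ^ k} hψev ⟨z₁, ?_, z₂, ?_, ?_, ?_⟩
        · exact ⟨hz₁s.1, hz₁s.2⟩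
        · exact ⟨hz₂s.1, hz₂s.2⟩
        · intro hcontr
          apply hζ1
          have : ψ z₁ = ψ z₂ := by rw [hcontr]
          rw [hz₁, hz₂] at this
          field_simp at this
          tauto
        · have e₁ : T z₁ - T x₀ = ψ z₁ ^ k := hz₁s.1
          have e₂ : T z₂ - T x₀ = ψ z₂ ^ k := hz₂s.1
          have : ψ z₁ ^ k = ψ z₂ ^ k := by
            rw [hz₁, hz₂, mul_pow, hζk, mul_one]
          have h3 := e₁.trans (this.trans e₂.symm)
          exact sub_left_inj.mp h3

lemma taylor4 {Ω : Set ℂ} (hΩo : IsOpen Ω) {T : ℂ → ℂ} (hT : DifferentiableOn ℂ T Ω)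
    {x₀ : ℂ} (hx₀ : x₀ ∈ Ω) :
    (fun h : ℂ => T (x₀ + h) - (T x₀ + h * deriv T x₀
        + h ^ 2 * ((2 : ℂ)⁻¹ * iteratedDeriv 2 T x₀)
        + h ^ 3 * ((6 : ℂ)⁻¹ * iteratedDeriv 3 T x₀)))
      =O[nhds 0] (fun h : ℂ => ‖h‖ ^ 4) := by
  obtain ⟨R, hR0, hRs⟩ := Metric.nhds_basis_closedBall.mem_iff.1 (hΩo.mem_nhds hx₀)
  lift R to NNReal using hR0.le
  have hp : HasFPowerSeriesOnBall T (cauchyPowerSeries T x₀ R) x₀ R :=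
    (hT.mono hRs).hasFPowerSeriesOnBall hR0
  set p := cauchyPowerSeries T x₀ R with hpdef
  have hcoeff : ∀ n : ℕ, p.coeff n = ((n.factorial : ℂ))⁻¹ * iteratedDeriv n T x₀ := by
    intro n
    have h1 : n.factorial • p n (fun _ => (1 : ℂ)) = iteratedFDeriv ℂ n T x₀ (fun _ => 1) :=
      hp.factorial_smul (1 : ℂ) n
    have h2 : iteratedDeriv n T x₀ = iteratedFDeriv ℂ n T x₀ (fun _ => 1) :=
      iteratedDeriv_eq_iteratedFDeriv ..
    have h3 : p.coeff n = p n (fun _ => 1) := rfl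
    rw [h3, h2, ← h1, nsmul_eq_mul, ← mul_assoc,
      inv_mul_cancel₀ (by exact_mod_cast n.factorial_ne_zero), one_mul]
  have hbig := hp.hasFPowerSeriesAt.isBigO_sub_partialSum_pow 4
  have heq : ∀ h : ℂ, p.partialSum 4 h = T x₀ + h * deriv T x₀
      + h ^ 2 * ((2 : ℂ)⁻¹ * iteratedDeriv 2 T x₀)
      + h ^ 3 * ((6 : ℂ)⁻¹ * iteratedDeriv 3 T x₀) := by
    intro h
    rw [FormalMultilinearSeries.partialSum]
    simp only [Finset.sum_range_succ, Finset.sum_range_zero,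
      FormalMultilinearSeries.apply_eq_pow_smul_coeff, hcoeff, smul_eq_mul,
      iteratedDeriv_zero, iteratedDeriv_one, Nat.factorial]
    push_cast
    ring
  calc (fun h : ℂ => T (x₀ + h) - (T x₀ + h * deriv T x₀
        + h ^ 2 * ((2 : ℂ)⁻¹ * iteratedDeriv 2 T x₀)
        + h ^ 3 * ((6 : ℂ)⁻¹ * iteratedDeriv 3 T x₀)))
      = fun h : ℂ => T (x₀ + h) - p.partialSum 4 h := by
        funext h; rw [heq]
    _ =O[nhds 0] (fun h : ℂ => ‖h‖ ^ 4) := hbig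

end Aux

open Filter Set

set_option maxHeartbeats 1000000

/-- The complex conjugate `g(x,y)` of the `x`-gradient of the regular part of the Green's
function: `g(x,y) = (1/(2π))·(T'(x)/(T(x)−T(y)) − conj(T(y))·T'(x)/(conj(T(y))·T(x)−1)
− 1/(x−y))`. -/
noncomputable def gfun (T : ℂ → ℂ) (x y : ℂ) : ℂ :=
  (2 * (Real.pi : ℂ))⁻¹ *
    (deriv T x / (T x - T y)
      - (starRingEnd ℂ) (T y) * deriv T x / ((starRingEnd ℂ) (T y) * T x - 1)
      - 1 / (x - y))

/-- if `T''(x₀) = 0` then, for `y` close to `x₀`,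
`2π·g(x₀,y) = (T'''(x₀)/(6T'(x₀)))·(y−x₀) + |T'(x₀)|²·conj(y−x₀) + O(|y−x₀|²)`. -/
theorem stmt8
    (Ω : Set ℂ) (hΩo : IsOpen Ω) (hΩb : Bornology.IsBounded Ω)
    (hΩc : IsConnected Ω) (hΩsc : SimplyConnectedSpace Ω)
    (x₀ : ℂ) (hx₀ : x₀ ∈ Ω)
    (T : ℂ → ℂ) (hTd : DifferentiableOn ℂ T Ω)
    (hTbij : Set.BijOn T Ω (Metric.ball 0 1))
    (hT0 : T x₀ = 0)
    (hT2 : iteratedDeriv 2 T x₀ = 0) :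
    ∃ δ₀ > (0:ℝ), ∃ C > (0:ℝ), Metric.closedBall x₀ δ₀ ⊆ Ω ∧
      ∀ y : ℂ, y ≠ x₀ → ‖y - x₀‖ ≤ δ₀ →
        ‖2 * (Real.pi : ℂ) * gfun T x₀ y
            - (iteratedDeriv 3 T x₀ / (6 * deriv T x₀)) * (y - x₀)
            - (((‖deriv T x₀‖ : ℝ) : ℂ) ^ 2) * (starRingEnd ℂ) (y - x₀)‖
          ≤ C * ‖y - x₀‖ ^ 2 := by
  set a : ℂ := deriv T x₀ with ha'
  have ha : a ≠ 0 := deriv_ne_zero_of_injOn hΩo hTd hTbij.injOn hx₀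
  clear_value a
  set D3 : ℂ := iteratedDeriv 3 T x₀ with hD3
  clear_value D3
  set c : ℂ := (6 : ℂ)⁻¹ * D3 with hc
  clear_value c
  -- Taylor remainder bound
  have big : (fun h : ℂ => T (x₀ + h) - (h * a + h ^ 3 * c)) =O[nhds 0]
      (fun h : ℂ => ‖h‖ ^ 4) := by
    have h0 := taylor4 hΩo hTd hx₀
    rw [← ha', ← hD3] at h0
    simpa [hT0, hT2, hc] using h0
  rw [Asymptotics.isBigO_iff] at big
  obtain ⟨M0, hM0ev⟩ := big
  obtain ⟨δ, hδ0, hδ⟩ := Metric.eventually_nhds_iff.mp hM0ev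
  set M : ℝ := max M0 1 with hM
  have hM1 : (1:ℝ) ≤ M := le_max_right _ _
  have hMpos : (0:ℝ) < M := lt_of_lt_of_le one_pos hM1
  have htay : ∀ h : ℂ, ‖h‖ ≤ δ/2 →
      ‖T (x₀ + h) - (h * a + h ^ 3 * c)‖ ≤ M * (‖h‖)^4 := by
    intro h hh
    have hd : dist h 0 < δ := by
      rw [dist_zero_right]
      linarith
    have := hδ hd
    calc ‖T (x₀ + h) - (h * a + h ^ 3 * c)‖ ≤ M0 * ‖‖h‖^4‖ := this
      _ ≤ M * (‖h‖)^4 := by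
          rw [norm_pow, norm_norm]
          have h4 : (0:ℝ) ≤ (‖h‖)^4 := by positivity
          nlinarith [le_max_left M0 1]
  clear hδ hM0ev
  clear_value M
  -- radius inside Ω
  obtain ⟨R, hR0, hRs⟩ := Metric.nhds_basis_closedBall.mem_iff.1 (hΩo.mem_nhds hx₀)
  set A : ℝ := ‖a‖ with hA
  have hApos : 0 < A := by rw [hA]; exact norm_pos_iff.mpr ha
  set Cc : ℝ := ‖c‖ with hCc
  set K : ℝ := Cc + M with hK
  have hKpos : 0 < K := by positivity
  set δ₀ : ℝ := min (min (δ/2) R) (min 1 (A/(2*K))) with hδ₀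
  have hδ₀pos : 0 < δ₀ := by
    apply lt_min (lt_min (by linarith) hR0) (lt_min one_pos (by positivity))
  have hδ₀le1 : δ₀ ≤ 1 := le_trans (min_le_right _ _) (min_le_left _ _)
  have hδ₀leA : δ₀ ≤ A/(2*K) := le_trans (min_le_right _ _) (min_le_right _ _)
  have hδ₀leδ : δ₀ ≤ δ/2 := le_trans (min_le_left _ _) (min_le_left _ _)
  have hδ₀leR : δ₀ ≤ R := le_trans (min_le_left _ _) (min_le_right _ _)
  set C : ℝ := 2*(A*M + Cc*K)/A^2 + A*K + 1 with hC
  have hCpos : 0 < C := by positivity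
  clear_value δ₀ A Cc K C
  refine ⟨δ₀, hδ₀pos, C, hCpos, ?_, ?_⟩
  · exact (Metric.closedBall_subset_closedBall hδ₀leR).trans hRs
  · intro y hy hyd
    set h : ℂ := y - x₀ with hh
    have hyx : y = x₀ + h := by rw [hh]; ring
    set S : ℂ := T y with hS
    have hTy : T (x₀ + h) = S := by rw [← hyx]
    set r : ℂ := S - h * a - h ^ 3 * c with hr
    have hh0 : h ≠ 0 := sub_ne_zero.mpr hy
    clear_value h S r
    set ah : ℝ := ‖h‖ with hah
    have hahpos : 0 < ah := by rw [hah]; exact norm_pos_iff.mpr hh0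
    clear_value ah
    have hah1 : ah ≤ 1 := le_trans hyd hδ₀le1
    have hrbound : ‖r‖ ≤ M * ah^4 := by
      have hyd' : ‖h‖ ≤ δ/2 := by rw [← hah]; exact le_trans hyd hδ₀leδ
      have := htay h hyd'
      rw [hTy] at this
      simpa [hr, hah, sub_sub] using this
    have hSa : ‖S - a * h‖ ≤ K * ah^3 := by
      have e : S - a * h = r + h ^ 3 * c := by rw [hr]; ring
      rw [e]
      have h2 : ‖r + h ^ 3 * c‖ ≤ ‖r‖ + ‖h^3 * c‖ :=
        norm_add_le _ _
      have h3 : ‖h^3 * c‖ = ah^3 * Cc := by rw [norm_mul, norm_pow, ← hah, ← hCc]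
      have h4 : ah^4 ≤ ah^3 := by
        have := mul_le_mul_of_nonneg_left hah1 (le_of_lt (pow_pos hahpos 3))
        calc ah^4 = ah^3 * ah := by ring
          _ ≤ ah^3 * 1 := this
          _ = ah^3 := by ring
      have h5 : M * ah^4 ≤ M * ah^3 := by nlinarith
      rw [hK]
      nlinarith [hrbound]
    have hKd : K * ah^2 ≤ A/2 := by
      have h1 : ah ≤ A/(2*K) := le_trans hyd hδ₀leA
      have h2 : ah^2 ≤ ah := by nlinarith
      have h3 : K * ah ≤ K * (A/(2*K)) := by nlinarith
      have h4 : K * (A/(2*K)) = A/2 := by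
        rw [mul_div_assoc', mul_comm 2 K]
        exact mul_div_mul_left A 2 hKpos.ne'
      nlinarith
    have hSlow : A/2 * ah ≤ ‖S‖ := by
      have e : a * h = S + (a*h - S) := by ring
      have h1 := norm_add_le S (a*h - S)
      rw [← e, norm_mul, ← hA, ← hah] at h1
      have e2 : ‖a*h - S‖ = ‖S - a*h‖ := by
        rw [← norm_neg]; ring_nf
      rw [e2] at h1
      have h6 : K * ah^3 ≤ A/2 * ah := by nlinarith
      nlinarith [hSa]
    have hS0 : S ≠ 0 := by
      intro hz
      rw [hz] at hSlow
      simp only [norm_zero] at hSlow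
      nlinarith
    have two_pi_ne : (2 * (Real.pi : ℂ)) ≠ 0 :=
      mul_ne_zero two_ne_zero (Complex.ofReal_ne_zero.mpr Real.pi_ne_zero)
    have habs2 : ((‖a‖ : ℂ))^2 = a * (starRingEnd ℂ) a := by
      rw [Complex.mul_conj]
      norm_cast
      exact Complex.sq_norm a
    have key : 2 * (Real.pi : ℂ) * gfun T x₀ y
            - (D3 / (6 * a)) * h
            - (((A : ℝ) : ℂ) ^ 2) * (starRingEnd ℂ) h
        = (a * r - c * h^2 * (S - a*h)) / (a * h * S)
          + a * ((starRingEnd ℂ) S - (starRingEnd ℂ) a * (starRingEnd ℂ) h) := by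
      simp only [gfun]
      rw [← ha', ← hS, hT0, hA, habs2, hr, hc]
      have hxy : x₀ - y = -h := by rw [hh]; ring
      rw [hxy]
      have hconjsub : (starRingEnd ℂ) S - (starRingEnd ℂ) a * (starRingEnd ℂ) h
          = (starRingEnd ℂ) S - (starRingEnd ℂ) a * (starRingEnd ℂ) h := rfl
      field_simp [ha, hh0, hS0, two_pi_ne]
      ring
    have hnum : ‖a*r - c*h^2*(S - a*h)‖ ≤ (A*M + Cc*K)*ah^4 := by
      have h1 : ‖a*r - c*h^2*(S-a*h)‖
          ≤ ‖a*r‖ + ‖c*h^2*(S-a*h)‖ := by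
        have := norm_add_le (a*r) (-(c*h^2*(S-a*h)))
        simpa [sub_eq_add_neg] using this
      have h2 : ‖a*r‖ ≤ A * (M*ah^4) := by
        rw [norm_mul, ← hA]; nlinarith [hrbound, norm_nonneg r]
      have h3 : ‖c*h^2*(S-a*h)‖ ≤ Cc * ah^2 * (K*ah^3) := by
        rw [norm_mul, norm_mul, norm_pow, ← hCc, ← hah]
        have hCc0 : (0:ℝ) ≤ Cc := hCc ▸ norm_nonneg c
        exact mul_le_mul_of_nonneg_left hSa (mul_nonneg hCc0 (pow_nonneg hahpos.le 2))
      have h5 : ah^5 ≤ ah^4 := by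
        have := mul_le_mul_of_nonneg_left hah1 (le_of_lt (pow_pos hahpos 4))
        calc ah^5 = ah^4 * ah := by ring
          _ ≤ ah^4 * 1 := this
          _ = ah^4 := by ring
      have hCc0 : (0:ℝ) ≤ Cc := hCc ▸ norm_nonneg c
      have e5 : Cc*ah^2*(K*ah^3) = (Cc*K)*ah^5 := by ring
      have e6 : (Cc*K)*ah^5 ≤ (Cc*K)*ah^4 :=
        mul_le_mul_of_nonneg_left h5 (mul_nonneg hCc0 hKpos.le)
      nlinarith
    have hden : A^2/2 * ah^2 ≤ ‖a*h*S‖ := by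
      rw [norm_mul, norm_mul, ← hA, ← hah]
      have b1 := mul_le_mul_of_nonneg_left hSlow (mul_nonneg hApos.le hahpos.le)
      nlinarith [b1]
    have hfrac : ‖(a*r - c*h^2*(S - a*h)) / (a*h*S)‖
        ≤ 2*(A*M + Cc*K)/A^2 * ah^2 := by
      rw [norm_div]
      have hd0 : (0:ℝ) < A^2/2 * ah^2 :=
        mul_pos (div_pos (pow_pos hApos 2) two_pos) (pow_pos hahpos 2)
      have h1 : ‖a*r - c*h^2*(S-a*h)‖ / ‖a*h*S‖
          ≤ ((A*M + Cc*K)*ah^4) / (A^2/2 * ah^2) := by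
        have hc0 : (0:ℝ) ≤ (A*M + Cc*K)*ah^4 := by
          have hCc0 : (0:ℝ) ≤ Cc := hCc ▸ norm_nonneg c
          have hsum := add_nonneg (mul_nonneg hApos.le hMpos.le) (mul_nonneg hCc0 hKpos.le)
          exact mul_nonneg hsum (pow_nonneg hahpos.le 4)
        exact div_le_div₀ hc0 hnum hd0 hden
      have h2 : ((A*M + Cc*K)*ah^4) / (A^2/2 * ah^2) = 2*(A*M + Cc*K)/A^2 * ah^2 := by
        field_simp [hApos.ne', hahpos.ne']
      rw [h2] at h1
      exact h1
    have hsecond : ‖a * ((starRingEnd ℂ) S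
        - (starRingEnd ℂ) a * (starRingEnd ℂ) h)‖ ≤ A*K*ah^2 := by
      have e : (starRingEnd ℂ) S - (starRingEnd ℂ) a * (starRingEnd ℂ) h
          = (starRingEnd ℂ) (S - a*h) := by simp [map_sub, map_mul]
      rw [e, norm_mul, Complex.norm_conj, ← hA]
      have h3 : ah^3 ≤ ah^2 := by
        have := mul_le_mul_of_nonneg_left hah1 (le_of_lt (pow_pos hahpos 2))
        calc ah^3 = ah^2 * ah := by ring
          _ ≤ ah^2 * 1 := this
          _ = ah^2 := by ring
      have b1 := mul_le_mul_of_nonneg_left hSa hApos.le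
      have b2 := mul_le_mul_of_nonneg_left h3 (mul_nonneg hApos.le hKpos.le)
      nlinarith [b1, b2]
    rw [key]
    calc ‖(a * r - c * h^2 * (S - a*h)) / (a * h * S)
          + a * ((starRingEnd ℂ) S - (starRingEnd ℂ) a * (starRingEnd ℂ) h)‖
        ≤ ‖(a * r - c * h^2 * (S - a*h)) / (a * h * S)‖
          + ‖a * ((starRingEnd ℂ) S
            - (starRingEnd ℂ) a * (starRingEnd ℂ) h)‖ := norm_add_le _ _
      _ ≤ 2*(A*M + Cc*K)/A^2 * ah^2 + A*K*ah^2 := add_le_add hfrac hsecond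
      _ ≤ C * ah^2 := by rw [hC]; nlinarith [sq_nonneg ah, pow_nonneg hahpos.le 2]
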